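/- Let n ≥ 2 and let v_0,…,v_n be affinely independent points in ℝ^n forming an n-simplex S all of whose facets are nonobtuse. Then: (i) if G is a vertex Gramian of S that is nonblocking, then G x = e has an entrywise nonnegative solution x (where e is the all-ones vector); and (ii) if every vertex Gramian of S is nonblocking, then the inverse of every vertex Gramian of S is a weakly diagonally dominant Stieltjes matrix (i.e., S is a nonobtuse simplex). -/

import Mathlib

open Matrix Finset
open scoped RealInnerProductSpace

noncomputable section

/-- The vertex Gramian of the simplex with vertices `v` associated with vertex `v ℓ`. -/
def vGram {n : ℕ} (v : Fin (n + 1) → EuclideanSpace ℝ (Fin n)) (ℓ : Fin (n + 1)) :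
    Matrix {k : Fin (n + 1) // k ≠ ℓ} {k : Fin (n + 1) // k ≠ ℓ} ℝ :=
  Matrix.of fun i j => ⟪v i.1 - v ℓ, v j.1 - v ℓ⟫

/-- A Stieltjes matrix: symmetric positive definite with nonpositive off-diagonal entries. -/
def IsStieltjes {ι : Type*} [Fintype ι] (M : Matrix ι ι ℝ) : Prop :=
  M.PosDef ∧ ∀ i j, i ≠ j → M i j ≤ 0

/-- Weakly diagonally dominant: `M e ≥ 0` entrywise for the all-ones vector `e`. -/
def IsWDD {ι : Type*} [Fintype ι] (M : Matrix ι ι ℝ) : Prop :=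
  ∀ i, 0 ≤ ∑ j, M i j

/-- Pointwise weakly diagonally dominant: each diagonal entry is maximal in its row. -/
def PWDD {ι : Type*} (M : Matrix ι ι ℝ) : Prop :=
  ∀ i j, M i j ≤ M i i

/-- The orthogonal projection of `x` onto the affine span of `{v k : k ∈ s}`
lies in the convex hull of `{v k : k ∈ s}`. -/
def ProjInHull {n : ℕ} (x : EuclideanSpace ℝ (Fin n))
    (v : Fin (n + 1) → EuclideanSpace ℝ (Fin n)) (s : Set (Fin (n + 1))) : Prop :=
  ∃ p ∈ convexHull ℝ (v '' s), ∀ a ∈ s, ∀ b ∈ s, ⟪x - p, v a - v b⟫ = 0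

/-- All facets of the simplex are nonobtuse: each vertex `v i` projects, for each `j ≠ i`,
into the convex hull of the vertices other than `v i, v j`. -/
def FacetsNonobtuse {n : ℕ} (v : Fin (n + 1) → EuclideanSpace ℝ (Fin n)) : Prop :=
  ∀ i j : Fin (n + 1), i ≠ j → ProjInHull (v i) v {k | k ≠ i ∧ k ≠ j}

/-- `q` is an inward normal to the facet opposite `v j`. -/
def IsInwardNormal {n : ℕ} (v : Fin (n + 1) → EuclideanSpace ℝ (Fin n)) (j : Fin (n + 1))
    (q : EuclideanSpace ℝ (Fin n)) : Prop :=
  q ≠ 0 ∧ (∀ a b : Fin (n + 1), a ≠ j → b ≠ j → ⟪q, v a - v b⟫ = 0) ∧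
    ∀ k : Fin (n + 1), k ≠ j → 0 < ⟪q, v j - v k⟫

/-- The `j`-th column of `A` is a blocking column: no off-diagonal entry of column `j`
is minimal in its row. -/
def IsBlockingCol {ι : Type*} (A : Matrix ι ι ℝ) (j : ι) : Prop :=
  ∀ i, i ≠ j → ∃ k, A i k < A i j

/-- `A` is nonblocking: every column has an off-diagonal entry minimal in its row. -/
def IsNonblocking {ι : Type*} (A : Matrix ι ι ℝ) : Prop :=
  ∀ j, ∃ i, i ≠ j ∧ ∀ k, A i j ≤ A i k

/-- A (symmetric nonnegative) ultrametric matrix. -/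
def IsUltra {ι : Type*} (A : Matrix ι ι ℝ) : Prop :=
  (∀ i j, 0 ≤ A i j) ∧ (∀ i j, A i j ≤ A i i) ∧ ∀ i j k, min (A i k) (A k j) ≤ A i j

/-- The principal submatrix of `A` with rows and columns restricted to `s`. -/
def subMat {ι : Type*} (A : Matrix ι ι ℝ) (s : Finset ι) :
    Matrix {x // x ∈ s} {x // x ∈ s} ℝ :=
  A.submatrix (fun i => i.1) (fun j => j.1)

/-- The principal submatrix of `A` obtained by deleting row and column `m`. -/
def delMat {ι : Type*} (A : Matrix ι ι ℝ) (m : ι) : Matrix {i // i ≠ m} {i // i ≠ m} ℝ :=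
  A.submatrix (fun i => i.1) (fun j => j.1)

section Tetra

variable {V : Type*} [NormedAddCommGroup V] [InnerProductSpace ℝ V]

/-- The triangle with vertices `a, b, c` is nonobtuse. -/
def NonobtuseTri (a b c : V) : Prop :=
  0 ≤ ⟪b - a, c - a⟫ ∧ 0 ≤ ⟪a - b, c - b⟫ ∧ 0 ≤ ⟪a - c, b - c⟫

/-- The sub-orthocentric set of the triangle `a b c`: the union over the vertices of the
closed segments from the vertex to the orthocenter. -/
def SubOrthoSet (a b c : V) : Set V :=
  {x | ∃ h, h ∈ affineSpan ℝ ({a, b, c} : Set V) ∧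
    ⟪h - a, b - c⟫ = 0 ∧ ⟪h - b, a - c⟫ = 0 ∧
    (x ∈ segment ℝ a h ∨ x ∈ segment ℝ b h ∨ x ∈ segment ℝ c h)}

/-- `p` is the orthogonal projection of `x` onto the affine span of `{a, b, c}`. -/
def IsOrthProjTri (x p a b c : V) : Prop :=
  p ∈ affineSpan ℝ ({a, b, c} : Set V) ∧ ⟪x - p, b - a⟫ = 0 ∧ ⟪x - p, c - a⟫ = 0

/-- A sub-orthocentric tetrahedron: all triangular faces are nonobtuse and each vertex
projects orthogonally into the sub-orthocentric set of its opposite face. -/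
def IsSubOrthoTetra (w : Fin 4 → V) : Prop :=
  ∀ i : Fin 4,
    NonobtuseTri (w (i.succAbove 0)) (w (i.succAbove 1)) (w (i.succAbove 2)) ∧
    ∃ p, IsOrthProjTri (w i) p (w (i.succAbove 0)) (w (i.succAbove 1)) (w (i.succAbove 2)) ∧
      p ∈ SubOrthoSet (w (i.succAbove 0)) (w (i.succAbove 1)) (w (i.succAbove 2))

end Tetra



section MyAux

variable {n : ℕ} {v : Fin (n + 1) → EuclideanSpace ℝ (Fin n)} {ℓ : Fin (n + 1)}

lemma myQuad (x : {k : Fin (n + 1) // k ≠ ℓ} → ℝ) :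
    dotProduct x (vGram v ℓ *ᵥ x) =
      ⟪∑ i, x i • (v i.1 - v ℓ), ∑ i, x i • (v i.1 - v ℓ)⟫ := by
  simp only [dotProduct, mulVec, vGram, Matrix.of_apply, sum_inner, inner_sum,
    real_inner_smul_left, real_inner_smul_right]
  congr 1; ext i; rw [Finset.mul_sum]; congr 1; ext j
  rw [real_inner_comm]; ring

lemma myLI (hv : AffineIndependent ℝ v) :
    LinearIndependent ℝ (fun i : {k : Fin (n + 1) // k ≠ ℓ} => v i.1 - v ℓ) := by
  have := (affineIndependent_iff_linearIndependent_vsub ℝ v ℓ).mp hv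
  simpa [vsub_eq_sub] using this

lemma myPosDef (hv : AffineIndependent ℝ v) : (vGram v ℓ).PosDef := by
  refine posDef_iff_dotProduct_mulVec.mpr ⟨?_, ?_⟩
  · ext i j
    simp only [vGram, Matrix.conjTranspose_apply, Matrix.of_apply, star_trivial]
    exact real_inner_comm _ _
  · intro x hx
    have h := myQuad (v := v) (ℓ := ℓ) x
    rw [show star x = x from rfl, h]
    have hc : ∑ i, x i • (v i.1 - v ℓ) ≠ 0 := by
      intro h0
      apply hx
      have := (Fintype.linearIndependent_iff.mp (myLI hv)) x h0
      funext i; exact this i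
    exact lt_of_le_of_ne real_inner_self_nonneg (fun h => hc (inner_self_eq_zero.mp h.symm))

lemma myCore (hn : 2 ≤ n) (hv : AffineIndependent ℝ v) (hfac : FacetsNonobtuse v)
    (hnb : IsNonblocking (vGram v ℓ)) :
    ∀ i, 0 ≤ ((vGram v ℓ)⁻¹ *ᵥ (fun _ => (1:ℝ))) i := by
  classical
  have hdet : IsUnit (vGram v ℓ).det := (myPosDef hv).det_pos.ne'.isUnit
  set x : {k : Fin (n+1) // k ≠ ℓ} → ℝ := (vGram v ℓ)⁻¹ *ᵥ (fun _ => 1) with hx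
  have hGx : vGram v ℓ *ᵥ x = fun _ => 1 := by
    rw [hx, mulVec_mulVec, mul_nonsing_inv _ hdet, one_mulVec]
  set c : EuclideanSpace ℝ (Fin n) := ∑ k, x k • (v k.1 - v ℓ) with hc
  have hci : ∀ i : {k : Fin (n+1) // k ≠ ℓ}, ⟪v i.1 - v ℓ, c⟫ = 1 := by
    intro i
    have h1 : (vGram v ℓ *ᵥ x) i = 1 := by rw [hGx]
    rw [← h1]
    simp only [hc, mulVec, dotProduct, vGram, Matrix.of_apply, inner_sum,
      real_inner_smul_right]
    exact Finset.sum_congr rfl fun j _ => (mul_comm _ _)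
  intro m
  by_contra hneg
  push_neg at hneg
  obtain ⟨z, hzhull, hzperp⟩ := hfac m.1 ℓ m.2
  have hzaff : v m.1 ≠ z := by
    intro hzm
    have h1 := hv.notMem_affineSpan_diff m.1 {k | k ≠ m.1 ∧ k ≠ ℓ}
    have h2 : {k : Fin (n+1) | k ≠ m.1 ∧ k ≠ ℓ} \ {m.1} = {k | k ≠ m.1 ∧ k ≠ ℓ} := by
      ext k
      simp only [Set.mem_diff, Set.mem_setOf_eq, Set.mem_singleton_iff]
      tauto
    rw [h2] at h1
    exact h1 (hzm ▸ convexHull_subset_affineSpan _ hzhull)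
  rw [Set.image_eq_range, convexHull_range_eq_exists_affineCombination] at hzhull
  obtain ⟨t, w, hw0, hw1, hzc⟩ := hzhull
  have hz : z = ∑ a ∈ t, w a • v a.1 := by
    rw [← hzc, affineCombination_eq_linear_combination _ _ _ hw1]
  have hzb : ∀ b : EuclideanSpace ℝ (Fin n), z - b = ∑ a ∈ t, w a • (v a.1 - b) := by
    intro b
    rw [hz]
    simp only [smul_sub, Finset.sum_sub_distrib, ← Finset.sum_smul, hw1, one_smul]
  set r : EuclideanSpace ℝ (Fin n) := v m.1 - z with hr
  have hrr : 0 < ⟪r, r⟫ := by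
    refine lt_of_le_of_ne real_inner_self_nonneg fun h => ?_
    exact hzaff (sub_eq_zero.mp (inner_self_eq_zero.mp h.symm))
  have hperpz : ∀ k : Fin (n+1), k ≠ m.1 → k ≠ ℓ → ⟪r, z - v k⟫ = 0 := by
    intro k hk1 hk2
    rw [hzb (v k), inner_sum]
    refine Finset.sum_eq_zero fun a _ => ?_
    rw [real_inner_smul_right, hzperp a.1 a.2 k ⟨hk1, hk2⟩, mul_zero]
  set D : ℝ := ⟪r, z - v ℓ⟫ with hD
  have hru : ∀ k : {k : Fin (n+1) // k ≠ ℓ}, k ≠ m → ⟪r, v k.1 - v ℓ⟫ = D := by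
    intro k hk
    have h1 : v k.1 - v ℓ = -(z - v k.1) + (z - v ℓ) := by abel
    rw [h1, inner_add_right, inner_neg_right,
      hperpz k.1 (fun h => hk (Subtype.ext h)) k.2]
    simp [hD]
  have hrm : ⟪r, v m.1 - v ℓ⟫ = ⟪r, r⟫ + D := by
    have h1 : v m.1 - v ℓ = (v m.1 - z) + (z - v ℓ) := by abel
    rw [h1, inner_add_right, hr, hD]
  have hcr : ⟪c, r⟫ = 0 := by
    have h1 : ⟪c, z - v ℓ⟫ = 1 := by
      rw [hzb (v ℓ), inner_sum]
      have : ∀ a ∈ t, ⟪c, w a • (v a.1 - v ℓ)⟫ = w a := by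
        intro a _
        rw [real_inner_smul_right, real_inner_comm, hci ⟨a.1, a.2.2⟩, mul_one]
      rw [Finset.sum_congr rfl this, hw1]
    have h2 : ⟪c, v m.1 - v ℓ⟫ = 1 := by rw [real_inner_comm]; exact hci m
    have h3 : r = (v m.1 - v ℓ) - (z - v ℓ) := by rw [hr]; abel
    rw [h3, inner_sub_right, h1, h2, sub_self]
  have hsum : (0:ℝ) = (∑ k, x k) * D + x m * ⟪r, r⟫ := by
    have h0 : ⟪c, r⟫ = ∑ k, x k * ⟪r, v k.1 - v ℓ⟫ := by
      rw [hc, sum_inner]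
      refine Finset.sum_congr rfl fun k _ => ?_
      rw [real_inner_smul_left, real_inner_comm]
    have h1 : ∀ k : {k : Fin (n+1) // k ≠ ℓ},
        x k * ⟪r, v k.1 - v ℓ⟫ = x k * D + (if k = m then x m * ⟪r, r⟫ else 0) := by
      intro k
      by_cases hk : k = m
      · subst hk; rw [hrm]; simp; ring
      · rw [hru k hk]; simp [hk]
    calc (0:ℝ) = ⟪c, r⟫ := hcr.symm
      _ = ∑ k, (x k * D + (if k = m then x m * ⟪r, r⟫ else 0)) := by
          rw [h0]; exact Finset.sum_congr rfl fun k _ => h1 k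
      _ = (∑ k, x k) * D + x m * ⟪r, r⟫ := by
          rw [Finset.sum_add_distrib, ← Finset.sum_mul, Finset.sum_ite_eq' Finset.univ]
          simp
  have hxs : 0 < ∑ k, x k := by
    have hpd : ((vGram v ℓ)⁻¹).PosDef := (myPosDef hv).inv
    have hk0 : {k : Fin (n+1) // k ≠ ℓ} := by
      by_cases h0 : ℓ = ⟨0, by omega⟩
      · exact ⟨⟨1, by omega⟩, by rw [h0]; intro h; simpa [Fin.ext_iff] using h⟩
      · exact ⟨⟨0, by omega⟩, fun h => h0 (h ▸ rfl)⟩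
    have hone : (fun _ : {k : Fin (n+1) // k ≠ ℓ} => (1:ℝ)) ≠ 0 := by
      intro h; exact one_ne_zero (congrFun h hk0)
    have h2 := hpd.dotProduct_mulVec_pos hone
    rw [show star (fun _ : {k : Fin (n+1) // k ≠ ℓ} => (1:ℝ)) = fun _ => (1:ℝ) from rfl] at h2
    simpa [dotProduct, hx] using h2
  have hD0 : 0 < D := by
    by_contra hDle
    push_neg at hDle
    have h1 : (∑ k, x k) * D ≤ 0 := mul_nonpos_iff.mpr (Or.inl ⟨hxs.le, hDle⟩)
    have h2 : x m * ⟪r, r⟫ < 0 := mul_neg_of_neg_of_pos hneg hrr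
    linarith
  obtain ⟨i, him, hmin⟩ := hnb m
  have hile : ⟪v i.1 - v ℓ, r⟫ ≤ 0 := by
    have e1 : ⟪v i.1 - v ℓ, r⟫
        = vGram v ℓ i m - ∑ a ∈ t, w a * vGram v ℓ i ⟨a.1, a.2.2⟩ := by
      have h3 : r = (v m.1 - v ℓ) - (z - v ℓ) := by rw [hr]; abel
      rw [h3, inner_sub_right, hzb (v ℓ), inner_sum]
      simp only [real_inner_smul_right]
      rfl
    have e2 : vGram v ℓ i m - ∑ a ∈ t, w a * vGram v ℓ i ⟨a.1, a.2.2⟩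
        = ∑ a ∈ t, w a * (vGram v ℓ i m - vGram v ℓ i ⟨a.1, a.2.2⟩) := by
      simp only [mul_sub, Finset.sum_sub_distrib, ← Finset.sum_mul, hw1, one_mul]
    rw [e1, e2]
    refine Finset.sum_nonpos fun a ha => ?_
    exact mul_nonpos_iff.mpr (Or.inl ⟨hw0 a ha, sub_nonpos.mpr (hmin _)⟩)
  rw [real_inner_comm, hru i him] at hile
  linarith

def myQ {n : ℕ} (v : Fin (n + 1) → EuclideanSpace ℝ (Fin n)) (ℓ : Fin (n + 1))
    (i : {k : Fin (n + 1) // k ≠ ℓ}) : EuclideanSpace ℝ (Fin n) :=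
  ∑ k, (vGram v ℓ)⁻¹ i k • (v k.1 - v ℓ)

lemma myCharQ (hv : AffineIndependent ℝ v) (i : {k : Fin (n + 1) // k ≠ ℓ})
    (a : Fin (n + 1)) :
    ⟪myQ v ℓ i, v a - v ℓ⟫ = if a = i.1 then 1 else 0 := by
  classical
  by_cases ha : a = ℓ
  · subst ha
    rw [if_neg (Ne.symm i.2)]
    simp [myQ]
  · have hdet : IsUnit (vGram v ℓ).det := (myPosDef hv).det_pos.ne'.isUnit
    have hBG : (vGram v ℓ)⁻¹ * vGram v ℓ = 1 := nonsing_inv_mul _ hdet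
    have h1 : ⟪myQ v ℓ i, v a - v ℓ⟫ = ((vGram v ℓ)⁻¹ * vGram v ℓ) i ⟨a, ha⟩ := by
      simp only [myQ, sum_inner, real_inner_smul_left, Matrix.mul_apply, vGram,
        Matrix.of_apply]
    rw [h1, hBG, Matrix.one_apply]
    by_cases h : a = i.1
    · rw [if_pos h, if_pos (Subtype.ext h.symm)]
    · rw [if_neg h, if_neg (fun hh => h (congrArg Subtype.val hh).symm)]

lemma myCharQ' (hv : AffineIndependent ℝ v) (i : {k : Fin (n + 1) // k ≠ ℓ})
    (a b : Fin (n + 1)) :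
    ⟪myQ v ℓ i, v a - v b⟫ =
      (if a = i.1 then (1:ℝ) else 0) - (if b = i.1 then 1 else 0) := by
  have h : v a - v b = (v a - v ℓ) - (v b - v ℓ) := by abel
  rw [h, inner_sub_right, myCharQ hv, myCharQ hv]

lemma myUniq (hn : 2 ≤ n) (hv : AffineIndependent ℝ v) (j : Fin (n + 1))
    (q : EuclideanSpace ℝ (Fin n)) (h : ∀ a, ⟪q, v a - v j⟫ = 0) : q = 0 := by
  classical
  have hli : LinearIndependent ℝ (fun i : {k : Fin (n + 1) // k ≠ j} => v i.1 - v j) :=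
    myLI hv
  have hcard : Fintype.card {k : Fin (n + 1) // k ≠ j}
      = Module.finrank ℝ (EuclideanSpace ℝ (Fin n)) := by
    rw [finrank_euclideanSpace_fin]
    rw [Fintype.card_subtype_compl, Fintype.card_subtype_eq, Fintype.card_fin]
    omega
  have hne : Nonempty {k : Fin (n + 1) // k ≠ j} := by
    by_cases h0 : j = ⟨0, by omega⟩
    · exact ⟨⟨1, by omega⟩, by rw [h0]; intro hh; simpa [Fin.ext_iff] using hh⟩
    · exact ⟨⟨0, by omega⟩, fun hh => h0 (hh ▸ rfl)⟩
  let b := basisOfLinearIndependentOfCardEqFinrank hli hcard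
  have hb : ∀ k, b k = v k.1 - v j := fun k =>
    congrFun (coe_basisOfLinearIndependentOfCardEqFinrank hli hcard) k
  have hall : ∀ y, ⟪q, y⟫ = 0 := by
    intro y
    rw [← b.sum_repr y, inner_sum]
    refine Finset.sum_eq_zero fun k _ => ?_
    rw [real_inner_smul_right, hb k, h k.1, mul_zero]
  exact inner_self_eq_zero.mp (hall q)

lemma myQeq (hn : 2 ≤ n) (hv : AffineIndependent ℝ v) {ℓ' : Fin (n + 1)}
    (i : {k : Fin (n + 1) // k ≠ ℓ}) (i' : {k : Fin (n + 1) // k ≠ ℓ'})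
    (hii : i.1 = i'.1) : myQ v ℓ i = myQ v ℓ' i' := by
  have h : ∀ a, ⟪myQ v ℓ i - myQ v ℓ' i', v a - v ℓ⟫ = 0 := by
    intro a
    rw [inner_sub_left, myCharQ hv, myCharQ' hv]
    rw [if_neg (fun hh : ℓ = i'.1 => i.2 (by rw [hii, ← hh]))]
    rw [← hii]
    ring
  exact sub_eq_zero.mp (myUniq hn hv ℓ _ h)

lemma myInnQ (hv : AffineIndependent ℝ v) (i j : {k : Fin (n + 1) // k ≠ ℓ}) :
    ⟪myQ v ℓ i, myQ v ℓ j⟫ = (vGram v ℓ)⁻¹ i j := by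
  classical
  rw [show myQ v ℓ j = ∑ k, (vGram v ℓ)⁻¹ j k • (v k.1 - v ℓ) from rfl, inner_sum]
  simp only [real_inner_smul_right, myCharQ hv]
  rw [Finset.sum_eq_single i]
  · rw [if_pos rfl, mul_one]
    have hH := ((myPosDef hv).inv (M := vGram v ℓ)).isHermitian
    have := congrFun (congrFun hH i) j
    simpa [Matrix.conjTranspose_apply] using this
  · intro k _ hk
    rw [if_neg (fun hh => hk (Subtype.ext hh)), mul_zero]
  · intro hh; exact absurd (Finset.mem_univ i) hh

lemma mySumQ (hn : 2 ≤ n) (hv : AffineIndependent ℝ v) (j : {k : Fin (n + 1) // k ≠ ℓ}) :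
    ∑ k : {k : Fin (n + 1) // k ≠ j.1}, myQ v j.1 k = - myQ v ℓ j := by
  classical
  have h : ∀ a, ⟪(∑ k : {k : Fin (n + 1) // k ≠ j.1}, myQ v j.1 k) + myQ v ℓ j,
      v a - v j.1⟫ = 0 := by
    intro a
    rw [inner_add_left, sum_inner, myCharQ' hv j a j.1]
    simp only [myCharQ hv]
    rw [if_pos trivial]
    by_cases ha : a = j.1
    · rw [Finset.sum_eq_zero (fun k _ => if_neg (fun hh : a = k.1 => k.2 (by rw [← hh, ha]))),
        if_pos ha]
      ring
    · rw [if_neg ha]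
      have h1 : ∑ k : {k : Fin (n + 1) // k ≠ j.1}, (if a = k.1 then (1:ℝ) else 0) = 1 := by
        rw [Finset.sum_eq_single ⟨a, ha⟩]
        · rw [if_pos rfl]
        · intro k _ hk
          exact if_neg (fun hh => hk (Subtype.ext hh.symm))
        · intro hh; exact absurd (Finset.mem_univ _) hh
      rw [h1]
      ring
  have h0 := myUniq hn hv j.1 _ h
  have := eq_neg_of_add_eq_zero_left h0
  rw [this]

lemma myOffdiag (hn : 2 ≤ n) (hv : AffineIndependent ℝ v) (hfac : FacetsNonobtuse v)
    (hnb : ∀ ℓ : Fin (n + 1), IsNonblocking (vGram v ℓ))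
    (i j : {k : Fin (n + 1) // k ≠ ℓ}) (hij : i ≠ j) : (vGram v ℓ)⁻¹ i j ≤ 0 := by
  classical
  have hij1 : i.1 ≠ j.1 := fun h => hij (Subtype.ext h)
  set i' : {k : Fin (n + 1) // k ≠ j.1} := ⟨i.1, hij1⟩ with hi'
  have e1 : (vGram v ℓ)⁻¹ i j = ⟪myQ v ℓ i, myQ v ℓ j⟫ := (myInnQ hv i j).symm
  have e2 : myQ v ℓ j = - ∑ k : {k : Fin (n + 1) // k ≠ j.1}, myQ v j.1 k := by
    rw [mySumQ hn hv j, neg_neg]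
  rw [e1, e2, inner_neg_right, inner_sum]
  have e3 : ∀ k : {k : Fin (n + 1) // k ≠ j.1},
      ⟪myQ v ℓ i, myQ v j.1 k⟫ = (vGram v j.1)⁻¹ i' k := by
    intro k
    rw [myQeq hn hv i i' rfl, myInnQ hv]
  rw [Finset.sum_congr rfl (fun k _ => e3 k)]
  have e4 : ∑ k, (vGram v j.1)⁻¹ i' k = ((vGram v j.1)⁻¹ *ᵥ fun _ => (1:ℝ)) i' := by
    simp [mulVec, dotProduct]
  have e5 := myCore hn hv hfac (hnb j.1) i'
  rw [e4]
  linarith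

end MyAux

theorem stmt9 (n : ℕ) (hn : 2 ≤ n) (v : Fin (n + 1) → EuclideanSpace ℝ (Fin n))
    (hv : AffineIndependent ℝ v) (hfac : FacetsNonobtuse v) :
    (∀ ℓ, IsNonblocking (vGram v ℓ) →
        ∃ x : {k : Fin (n + 1) // k ≠ ℓ} → ℝ, (∀ i, 0 ≤ x i) ∧ vGram v ℓ *ᵥ x = 1) ∧
    ((∀ ℓ, IsNonblocking (vGram v ℓ)) →
        ∀ ℓ, IsStieltjes (vGram v ℓ)⁻¹ ∧ IsWDD (vGram v ℓ)⁻¹) := by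
  constructor
  · intro ℓ hnb
    refine ⟨(vGram v ℓ)⁻¹ *ᵥ (fun _ => 1), myCore hn hv hfac hnb, ?_⟩
    rw [mulVec_mulVec, mul_nonsing_inv _ ((myPosDef hv).det_pos.ne'.isUnit), one_mulVec]
    rfl
  · intro hnb ℓ
    refine ⟨⟨(myPosDef hv).inv, fun i j hij => myOffdiag hn hv hfac hnb i j hij⟩, ?_⟩
    intro i
    have h := myCore hn hv hfac (hnb ℓ) i
    simpa [mulVec, dotProduct] using h
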